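/- Let X be a metrizable topological space, Γ a group acting on X by homeomorphisms, and 𝒰 an open cover of X such that for every U ∈ 𝒰, the orbit ΓU = {gU : g ∈ Γ} has no accumulation point in X (i.e., no point x ∈ X has the property that every neighborhood of x meets gU for infinitely many g). Then the action is properly discontinuous: for every compact K ⊆ X, only finitely many g ∈ Γ satisfy gK ∩ K ≠ ∅. -/

import Mathlib

open Pointwise

/-- If a group acts by homeomorphisms on a metrizable space and there is an open cover
`𝒰` such that no orbit `Γ U` of a member of the cover has an accumulation point, then
the action is properly discontinuous. -/
theorem stmt_1 {Γ X : Type*} [Group Γ] [TopologicalSpace X]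
    [TopologicalSpace.MetrizableSpace X] [MulAction Γ X]
    (hcont : ∀ g : Γ, Continuous fun x : X => g • x)
    (𝒰 : Set (Set X)) (hopen : ∀ U ∈ 𝒰, IsOpen U) (hcover : ⋃₀ 𝒰 = Set.univ)
    (hacc : ∀ U ∈ 𝒰, ¬ ∃ x : X, ∀ V ∈ nhds x, {g : Γ | ((g • U) ∩ V).Nonempty}.Infinite) :
    ∀ K : Set X, IsCompact K → {g : Γ | ((g • K) ∩ K).Nonempty}.Finite := by
  intro K hK
  -- Key: for each U ∈ 𝒰, only finitely many translates of U meet K.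
  have key : ∀ U ∈ 𝒰, {g : Γ | ((g • U) ∩ K).Nonempty}.Finite := by
    intro U hU
    by_contra hS
    replace hS : {g : Γ | ((g • U) ∩ K).Nonempty}.Infinite := hS
    apply hacc U hU
    haveI := hS.to_subtype
    set S := {g : Γ | ((g • U) ∩ K).Nonempty} with hSdef
    have hxm : ∀ s : S, (Exists.choose s.2) ∈ ((s : Γ) • U) ∩ K := fun s => s.2.choose_spec
    set x : S → X := fun s => Exists.choose s.2 with hxdef
    have hneb : (Filter.map x Filter.cofinite).NeBot := Filter.map_neBot
    have hle : Filter.map x Filter.cofinite ≤ Filter.principal K := by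
      rw [Filter.le_principal_iff, Filter.mem_map]
      have : x ⁻¹' K = Set.univ := by
        ext s; simp only [Set.mem_preimage, Set.mem_univ, iff_true]; exact (hxm s).2
      rw [this]
      exact Filter.univ_mem
    obtain ⟨x₀, hx₀, hcl⟩ := hK hle
    refine ⟨x₀, fun V hV => ?_⟩
    have hfreq : ∃ᶠ s in (Filter.cofinite : Filter S), x s ∈ V :=
      mapClusterPt_iff_frequently.mp hcl V hV
    rw [Filter.frequently_cofinite_iff_infinite] at hfreq
    have himg : Subtype.val '' {s : S | x s ∈ V} ⊆ {g : Γ | ((g • U) ∩ V).Nonempty} := by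
      rintro g ⟨s, hs, rfl⟩
      exact ⟨x s, (hxm s).1, hs⟩
    exact Set.Infinite.mono himg (hfreq.image (Set.injOn_of_injective Subtype.val_injective))
  -- Extract a finite subcover of K from 𝒰.
  have hKsub : K ⊆ ⋃ U ∈ 𝒰, U := by
    intro k _
    have : k ∈ ⋃₀ 𝒰 := by rw [hcover]; trivial
    simpa [Set.sUnion_eq_biUnion] using this
  obtain ⟨T, hT𝒰, hTfin, hTcov⟩ := hK.elim_finite_subcover_image (fun U hU => hopen U hU) hKsub
  have hsub : {g : Γ | ((g • K) ∩ K).Nonempty} ⊆ ⋃ U ∈ T, {g : Γ | ((g • U) ∩ K).Nonempty} := by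
    rintro g ⟨y, ⟨k, hk, rfl⟩, hyK⟩
    obtain ⟨U, hUT, hkU⟩ := Set.mem_iUnion₂.mp (hTcov hk)
    exact Set.mem_iUnion₂.mpr ⟨U, hUT, ⟨g • k, ⟨k, hkU, rfl⟩, hyK⟩⟩
  exact Set.Finite.subset (hTfin.biUnion fun U hUT => key U (hT𝒰 hUT)) hsub
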